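/- Every subgroup of finite index in a free abelian group $\mathbb Z^{(I)}$ (free abelian on a set $I$, possibly infinite) is free abelian of the same rank, i.e., isomorphic to $\mathbb Z^{(I)}$. -/

import Mathlib

open Finsupp

private lemma index_map_addequiv {G G' : Type*} [AddGroup G] [AddGroup G']
    (e : G ≃+ G') (K : AddSubgroup G) :
    (K.map e.toAddMonoidHom).index = K.index := by
  rw [AddSubgroup.index_map, (AddMonoidHom.ker_eq_bot_iff _).mpr e.injective,
    AddMonoidHom.range_eq_top_of_surjective _ e.surjective, sup_bot_eq,
    AddSubgroup.index_top, mul_one]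


private lemma index_eq_of_addequiv {A B : Type*} [AddGroup A] [AddGroup B]
    (e : A ≃+ B) (K : AddSubgroup A) (L : AddSubgroup B)
    (h : ∀ x, x ∈ K ↔ e x ∈ L) : L.index = K.index := by
  have hL : L = K.map e.toAddMonoidHom := by
    ext y
    constructor
    · intro hy
      exact ⟨e.symm y, (h _).mpr (by simpa using hy), by simp⟩
    · rintro ⟨x, hx, rfl⟩
      exact (h x).mp hx
  rw [hL, index_map_addequiv]

/-- Every subgroup of finite index in the free abelian group `ℤ^(I)` (free
abelian on a possibly infinite set `I`) is free abelian of the same rank, i.e.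
isomorphic to `ℤ^(I)`. -/
theorem stmt6 (I : Type*) (H : AddSubgroup (I →₀ ℤ)) (hH : H.FiniteIndex) :
    Nonempty (H ≃+ (I →₀ ℤ)) := by
  classical
  set M := I →₀ ℤ with hM
  set N : Submodule ℤ M := AddSubgroup.toIntSubmodule H with hNdef
  haveI : Finite (M ⧸ H) := H.finite_quotient_of_finiteIndex
  haveI := Fintype.ofFinite (M ⧸ H)
  let π : M →+ M ⧸ H := QuotientAddGroup.mk' H
  let S : Finset I := Finset.univ.biUnion fun q : M ⧸ H => (Quotient.out q).support
  let a : I → M := fun j => Quotient.out (π (Finsupp.single j 1))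
  have ha : ∀ j, π (a j) = π (Finsupp.single j 1) := fun j =>
    QuotientAddGroup.out_eq' _
  have haS : ∀ j, ∀ i ∈ (a j).support, i ∈ S := fun j i hi =>
    Finset.mem_biUnion.2 ⟨π (Finsupp.single j 1), Finset.mem_univ _, hi⟩
  let v : I → M := fun j => if j ∈ S then Finsupp.single j 1 else Finsupp.single j 1 - a j
  let w : I → M := fun j => if j ∈ S then Finsupp.single j 1 else Finsupp.single j 1 + a j
  let T : M →ₗ[ℤ] M := Finsupp.linearCombination ℤ v
  let T' : M →ₗ[ℤ] M := Finsupp.linearCombination ℤ w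
  have hfix : ∀ (u : I → M), (∀ i ∈ S, u i = Finsupp.single i 1) →
      ∀ x : M, (∀ i ∈ x.support, i ∈ S) → Finsupp.linearCombination ℤ u x = x := by
    intro u hu x hx
    rw [Finsupp.linearCombination_apply, Finsupp.sum]
    rw [Finset.sum_congr rfl (fun i hi => by
      rw [hu i (hx i hi), Finsupp.smul_single, smul_eq_mul, mul_one])]
    exact Finsupp.sum_single x
  have hTfix : ∀ x : M, (∀ i ∈ x.support, i ∈ S) → T x = x :=
    hfix v (fun i hi => if_pos hi)
  have hT'fix : ∀ x : M, (∀ i ∈ x.support, i ∈ S) → T' x = x :=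
    hfix w (fun i hi => if_pos hi)
  have hTs : ∀ j, T (Finsupp.single j 1) = v j := fun j => by
    show Finsupp.linearCombination ℤ v (Finsupp.single j 1) = v j
    rw [Finsupp.linearCombination_single, one_smul]
  have hT's : ∀ j, T' (Finsupp.single j 1) = w j := fun j => by
    show Finsupp.linearCombination ℤ w (Finsupp.single j 1) = w j
    rw [Finsupp.linearCombination_single, one_smul]
  have hTT' : T.comp T' = LinearMap.id := by
    refine Finsupp.lhom_ext' fun j => LinearMap.ext_ring ?_
    simp only [LinearMap.comp_apply, LinearMap.id_apply, Finsupp.lsingle_apply,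
      LinearMap.coe_comp, Function.comp_apply]
    rw [hT's j]
    by_cases hj : j ∈ S
    · rw [show w j = Finsupp.single j 1 from if_pos hj, hTs j,
        show v j = Finsupp.single j 1 from if_pos hj]
    · rw [show w j = Finsupp.single j 1 + a j from if_neg hj, map_add, hTs j,
        show v j = Finsupp.single j 1 - a j from if_neg hj, hTfix (a j) (haS j)]
      abel
  have hT'T : T'.comp T = LinearMap.id := by
    refine Finsupp.lhom_ext' fun j => LinearMap.ext_ring ?_
    simp only [LinearMap.comp_apply, LinearMap.id_apply, Finsupp.lsingle_apply,
      LinearMap.coe_comp, Function.comp_apply]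
    rw [hTs j]
    by_cases hj : j ∈ S
    · rw [show v j = Finsupp.single j 1 from if_pos hj, hT's j,
        show w j = Finsupp.single j 1 from if_pos hj]
    · rw [show v j = Finsupp.single j 1 - a j from if_neg hj, map_sub, hT's j,
        show w j = Finsupp.single j 1 + a j from if_neg hj, hT'fix (a j) (haS j)]
      abel
  let U : M ≃ₗ[ℤ] M := LinearEquiv.ofLinear T T' hTT' hT'T
  let N₂ : Submodule ℤ M := N.map (U.symm : M →ₗ[ℤ] M)
  have hmem : ∀ x : M, (∀ i ∈ x.support, i ∉ S) → x ∈ N₂ := by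
    intro x hx
    refine ⟨T x, ?_, U.symm_apply_apply x⟩
    rw [show T x = Finsupp.linearCombination ℤ v x from rfl,
      Finsupp.linearCombination_apply, Finsupp.sum]
    refine Submodule.sum_mem _ fun i hi => Submodule.smul_mem _ _ ?_
    have hiS := hx i hi
    rw [show v i = Finsupp.single i 1 - a i from if_neg hiS]
    show Finsupp.single i 1 - a i ∈ H
    have h0 : π (Finsupp.single i 1 - a i) = 0 := by rw [map_sub, ha i, sub_self]
    simp only [π, QuotientAddGroup.mk'_apply] at h0
    exact (QuotientAddGroup.eq_zero_iff _).mp h0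
  -- splitting
  let p : I → Prop := fun i => i ∈ S
  let Ψ : M ≃ₗ[ℤ] ((↥S →₀ ℤ) × ({i : I // ¬ p i} →₀ ℤ)) :=
    (Finsupp.domLCongr (Equiv.sumCompl p).symm).trans (Finsupp.sumFinsuppLEquivProdFinsupp (R := ℤ) (M := ℤ))
  let N₃ := N₂.map (Ψ : M →ₗ[ℤ] ((↥S →₀ ℤ) × ({i : I // ¬ p i} →₀ ℤ)))
  let P := N₃.map (LinearMap.fst ℤ (↥S →₀ ℤ) ({i : I // ¬ p i} →₀ ℤ))
  have hbot : ∀ q : ({i : I // ¬ p i} →₀ ℤ), ((0 : ↥S →₀ ℤ), q) ∈ N₃ := by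
    intro q
    have hx : ∀ i ∈ (Ψ.symm ((0 : ↥S →₀ ℤ), q)).support, i ∉ S := by
      intro i hi hiS
      have : (Ψ.symm ((0 : ↥S →₀ ℤ), q)) i = 0 := by
        show ((Finsupp.domLCongr (R := ℤ) (M := ℤ) (Equiv.sumCompl p).symm).symm
          ((Finsupp.sumFinsuppLEquivProdFinsupp (R := ℤ) (M := ℤ)).symm ((0 : ↥S →₀ ℤ), q))) i = 0
        rw [Finsupp.domLCongr_symm]
        rw [Finsupp.domLCongr_apply, Finsupp.domCongr_apply, Finsupp.equivMapDomain_apply]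
        simp only [Equiv.symm_symm]
        rw [Equiv.sumCompl_symm_apply_of_pos (p := p) hiS]
        rw [Finsupp.sumFinsuppLEquivProdFinsupp_symm_inl]
        rfl
      exact (Finsupp.mem_support_iff.mp hi) this
    refine ⟨Ψ.symm ((0 : ↥S →₀ ℤ), q), hmem _ hx, Ψ.apply_symm_apply _⟩
  have hsplit : N₃ = P.prod ⊤ := by
    apply le_antisymm
    · rintro z hz
      exact ⟨⟨z, hz, rfl⟩, trivial⟩
    · rintro ⟨y, q⟩ ⟨⟨z, hz, hz1⟩, -⟩
      have h2 : ((0 : ↥S →₀ ℤ), q - z.2) ∈ N₃ := hbot _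
      have h3 := N₃.add_mem hz h2
      have h4 : z + ((0 : ↥S →₀ ℤ), q - z.2) = (y, q) := by
        refine Prod.ext ?_ ?_
        · show z.1 + 0 = y; rw [add_zero]; exact hz1
        · show z.2 + (q - z.2) = q; abel
      rwa [h4] at h3
  -- index transfer
  let Φ : M ≃ₗ[ℤ] ((↥S →₀ ℤ) × ({i : I // ¬ p i} →₀ ℤ)) := U.symm.trans Ψ
  have hmemΦ : ∀ x : M, x ∈ H ↔ Φ.toAddEquiv x ∈ N₃.toAddSubgroup := by
    intro x
    show x ∈ H ↔ Ψ (U.symm x) ∈ N₃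
    constructor
    · intro hx
      exact ⟨U.symm x, ⟨x, hx, rfl⟩, rfl⟩
    · rintro ⟨y, hy2, hy3⟩
      obtain rfl : y = U.symm x := Ψ.injective hy3
      obtain ⟨z, hz, hz2⟩ := hy2
      obtain rfl : z = x := U.symm.injective hz2
      exact hz
  have hN₃idx : N₃.toAddSubgroup.index = H.index :=
    index_eq_of_addequiv Φ.toAddEquiv H N₃.toAddSubgroup hmemΦ
  have hprod : N₃.toAddSubgroup
      = (P.toAddSubgroup.prod (⊤ : Submodule ℤ ({i : I // ¬ p i} →₀ ℤ)).toAddSubgroup) := by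
    rw [hsplit]; rfl
  have hPidx : P.toAddSubgroup.index ≠ 0 := by
    intro h0
    apply hH.index_ne_zero
    rw [← hN₃idx, hprod]
    simp [h0]
  -- the finite-rank part
  let F := Finsupp.linearEquivFunOnFinite ℤ ℤ ↥S
  let P' := P.map (F : (↥S →₀ ℤ) →ₗ[ℤ] (↥S → ℤ))
  have hmemF : ∀ x, x ∈ P.toAddSubgroup ↔ F.toAddEquiv x ∈ P'.toAddSubgroup := by
    intro x
    show x ∈ P ↔ F x ∈ P'
    constructor
    · intro hx; exact ⟨x, hx, rfl⟩
    · rintro ⟨y, hy, hy2⟩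
      obtain rfl : y = x := F.injective hy2
      exact hy
  have hP'idx : P'.toAddSubgroup.index ≠ 0 := by
    rw [index_eq_of_addequiv F.toAddEquiv P.toAddSubgroup P'.toAddSubgroup hmemF]
    exact hPidx
  obtain ⟨g⟩ : Nonempty (P'.toAddSubgroup ≃+ (↥S → ℤ)) :=
    Int.addSubgroup_index_ne_zero_iff.mp hP'idx
  -- assembly
  let eHN : H ≃+ N :=
  { toFun := fun x => ⟨x.1, x.2⟩, invFun := fun x => ⟨x.1, x.2⟩,
    left_inv := fun _ => rfl, right_inv := fun _ => rfl,
    map_add' := fun _ _ => rfl }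
  let e2 : N ≃ₗ[ℤ] N₂ := U.symm.submoduleMap N
  let e3 : N₂ ≃ₗ[ℤ] N₃ := Ψ.submoduleMap N₂
  let e4 : N₃ ≃ₗ[ℤ] (P.prod (⊤ : Submodule ℤ ({i : I // ¬ p i} →₀ ℤ))) :=
    LinearEquiv.ofEq _ _ hsplit
  let e5 : (P.prod (⊤ : Submodule ℤ ({i : I // ¬ p i} →₀ ℤ)))
      ≃+ (↥P × ↥(⊤ : Submodule ℤ ({i : I // ¬ p i} →₀ ℤ))) :=
  { toFun := fun z => (⟨z.1.1, (Submodule.mem_prod.mp z.2).1⟩,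
      ⟨z.1.2, (Submodule.mem_prod.mp z.2).2⟩),
    invFun := fun y => ⟨(y.1.1, y.2.1), Submodule.mem_prod.mpr ⟨y.1.2, y.2.2⟩⟩,
    left_inv := fun _ => rfl, right_inv := fun _ => rfl,
    map_add' := fun _ _ => rfl }
  let eP1 : P ≃ₗ[ℤ] P' := F.submoduleMap P
  let ePP : (P'.toAddSubgroup : Type _) ≃+ P' :=
  { toFun := fun x => ⟨x.1, x.2⟩, invFun := fun x => ⟨x.1, x.2⟩,
    left_inv := fun _ => rfl, right_inv := fun _ => rfl,
    map_add' := fun _ _ => rfl }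
  let e6 : (P : Type _) ≃+ (↥S →₀ ℤ) :=
    (eP1.toAddEquiv.trans ePP.symm).trans (g.trans F.symm.toAddEquiv)
  let e7 : (⊤ : Submodule ℤ ({i : I // ¬ p i} →₀ ℤ)) ≃ₗ[ℤ] ({i : I // ¬ p i} →₀ ℤ) :=
    Submodule.topEquiv
  exact ⟨(((((eHN.trans e2.toAddEquiv).trans e3.toAddEquiv).trans e4.toAddEquiv).trans
    e5).trans (AddEquiv.prodCongr e6 e7.toAddEquiv)).trans Ψ.symm.toAddEquiv⟩
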